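/- Explicit description of the gauge group H (formula (4) of the paper): a proper orthochronous Lorentz transformation Λ satisfies (Λl)∧(Λm) = c·(l∧m) for some c ∈ ℂ with |c| = 1 (i.e. Λ preserves the 2-form l∧m modulo U(1)) if and only if Λ = B(f)R(φ) for some f ∈ ℂ and φ ∈ ℝ. -/

import Mathlib

noncomputable section

open scoped Matrix

/-- η := diag(1,−1,−1,−1). -/
def ηM : Matrix (Fin 4) (Fin 4) ℝ :=
  !![1, 0, 0, 0; 0, -1, 0, 0; 0, 0, -1, 0; 0, 0, 0, -1]

/-- Λ is a proper orthochronous Lorentz transformation. -/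
def IsLorentz (Λ : Matrix (Fin 4) (Fin 4) ℝ) : Prop :=
  Λᵀ * ηM * Λ = ηM ∧ Λ.det = 1 ∧ 0 < Λ 0 0

/-- Complexification of a real matrix. -/
def toC (Λ : Matrix (Fin 4) (Fin 4) ℝ) : Matrix (Fin 4) (Fin 4) ℂ :=
  Λ.map (fun t => (t : ℂ))

/-- l := e₀ + e₃. -/
def lV : Fin 4 → ℂ := ![1, 0, 0, 1]

/-- m := e₁ + ie₂. -/
def mV : Fin 4 → ℂ := ![0, 1, Complex.I, 0]

/-- m̄ := e₁ − ie₂. -/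
def mbV : Fin 4 → ℂ := ![0, 1, -Complex.I, 0]

/-- n := e₀ − e₃. -/
def nV : Fin 4 → ℂ := ![1, 0, 0, -1]

/-- The 2-form l∧m, identified with the antisymmetric matrix l mᵀ − m lᵀ. -/
def lmWedge : Matrix (Fin 4) (Fin 4) ℂ :=
  Matrix.vecMulVec lV mV - Matrix.vecMulVec mV lV

/-- The real 4×4 matrix B(f): B(f)l = l, B(f)m = m + f l, B(f)m̄ = m̄ + f̄ l,
B(f)n = n + f m̄ + f̄ m + |f|² l. -/
def Bmat (f : ℂ) : Matrix (Fin 4) (Fin 4) ℝ :=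
  !![1 + Complex.normSq f / 2, f.re, f.im, -(Complex.normSq f / 2);
     f.re, 1, 0, -f.re;
     f.im, 0, 1, -f.im;
     Complex.normSq f / 2, f.re, f.im, 1 - Complex.normSq f / 2]

/-- The rotation R(φ) by angle φ in the e₁,e₂-plane: R(φ)l = l, R(φ)n = n,
R(φ)m = e^{iφ} m. -/
def Rmat (φ : ℝ) : Matrix (Fin 4) (Fin 4) ℝ :=
  !![1, 0, 0, 0;
     0, Real.cos φ, Real.sin φ, 0;
     0, -Real.sin φ, Real.cos φ, 0;
     0, 0, 0, 1]

set_option maxHeartbeats 1000000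

theorem keylem {n : Type*} [Fintype n] (M : Matrix n n ℂ) (a b : n → ℂ) :
    M * Matrix.vecMulVec a b * Mᵀ = Matrix.vecMulVec (M.mulVec a) (M.mulVec b) := by
  ext i j
  simp only [Matrix.mul_apply, Matrix.vecMulVec_apply, Matrix.mulVec, dotProduct,
    Finset.sum_mul, Finset.mul_sum, Matrix.transpose_apply]
  exact Finset.sum_congr rfl fun k _ => Finset.sum_congr rfl fun l _ => by ring

theorem rowrel (Λ : Matrix (Fin 4) (Fin 4) ℝ) (hL : Λᵀ * ηM * Λ = ηM) : Λ * ηM * Λᵀ = ηM := by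
  have hη2 : ηM * ηM = 1 := by
    ext i j; fin_cases i <;> fin_cases j <;>
      simp [Matrix.mul_apply, Fin.sum_univ_four, ηM, Matrix.one_apply,
        Matrix.vecHead, Matrix.vecTail]
  have h1 : (ηM * Λᵀ * ηM) * Λ = 1 := by
    calc (ηM * Λᵀ * ηM) * Λ = ηM * (Λᵀ * ηM * Λ) := by simp only [Matrix.mul_assoc]
    _ = 1 := by rw [hL, hη2]
  have h2 : Λ * (ηM * Λᵀ * ηM) = 1 := mul_eq_one_comm.mp h1
  calc Λ * ηM * Λᵀ = (Λ * (ηM * Λᵀ * ηM)) * ηM := by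
        simp only [Matrix.mul_assoc, hη2, Matrix.mul_one]
    _ = ηM := by rw [h2, one_mul]


/-- Explicit description of the gauge group H (formula (4) of the paper): a proper
orthochronous Lorentz transformation Λ preserves l∧m modulo U(1) if and only if
Λ = B(f)R(φ) for some f ∈ ℂ, φ ∈ ℝ. -/theorem gauge_group_H_explicit (Λ : Matrix (Fin 4) (Fin 4) ℝ) (hΛ : IsLorentz Λ) :
    (∃ c : ℂ, ‖c‖ = 1 ∧ toC Λ * lmWedge * (toC Λ)ᵀ = c • lmWedge) ↔
    (∃ (f : ℂ) (φ : ℝ), Λ = Bmat f * Rmat φ) := by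
  obtain ⟨hL, hdet, hpos⟩ := hΛ
  constructor
  · rintro ⟨c, hc, hW⟩
    have hc0 : c ≠ 0 := by intro h; rw [h] at hc; simp at hc
    have hW' : Matrix.vecMulVec ((toC Λ).mulVec lV) ((toC Λ).mulVec mV)
        - Matrix.vecMulVec ((toC Λ).mulVec mV) ((toC Λ).mulVec lV) = c • lmWedge := by
      rw [← hW, lmWedge, Matrix.mul_sub, Matrix.sub_mul, keylem, keylem]
    have E : ∀ i j, ((Λ i 0 : ℂ) + Λ i 3) * ((Λ j 1 : ℂ) + Λ j 2 * Complex.I)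
        - ((Λ i 1 : ℂ) + Λ i 2 * Complex.I) * ((Λ j 0 : ℂ) + Λ j 3)
        = c * lmWedge i j := by
      intro i j
      have := congrFun (congrFun hW' i) j
      simpa [Matrix.vecMulVec_apply, Matrix.mulVec, dotProduct, Fin.sum_univ_four,
        toC, lV, mV] using this
    have E01 := E 0 1
    have E10 := E 1 0
    have E31 := E 3 1
    have E03 := E 0 3
    have E12 := E 1 2
    have E20 := E 2 0
    simp [lmWedge, Matrix.vecMulVec_apply, lV, mV] at E01 E10 E31 E03 E12 E20
    have hu03 : c * ((↑(Λ 0 0) + ↑(Λ 0 3)) - (↑(Λ 3 0) + ↑(Λ 3 3)) : ℂ) = 0 := by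
      linear_combination (-(↑(Λ 1 0) + ↑(Λ 1 3)) : ℂ) * E03 - (↑(Λ 0 0) + ↑(Λ 0 3)) * E31 - (↑(Λ 3 0) + ↑(Λ 3 3)) * E10
    have hu2 : c * ((↑(Λ 2 0) + ↑(Λ 2 3)) - Complex.I * (↑(Λ 1 0) + ↑(Λ 1 3)) : ℂ) = 0 := by
      linear_combination (-(↑(Λ 2 0) + ↑(Λ 2 3)) : ℂ) * E01 - (↑(Λ 0 0) + ↑(Λ 0 3)) * E12 - (↑(Λ 1 0) + ↑(Λ 1 3)) * E20
    have hw03 : c * (((↑(Λ 0 1) + ↑(Λ 0 2) * Complex.I) - (↑(Λ 3 1) + ↑(Λ 3 2) * Complex.I)) : ℂ) = 0 := by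
      linear_combination (-(↑(Λ 1 1) + ↑(Λ 1 2) * Complex.I) : ℂ) * E03 - (↑(Λ 0 1) + ↑(Λ 0 2) * Complex.I) * E31 - (↑(Λ 3 1) + ↑(Λ 3 2) * Complex.I) * E10
    have hw2 : c * ((↑(Λ 2 1) + ↑(Λ 2 2) * Complex.I) - Complex.I * (↑(Λ 1 1) + ↑(Λ 1 2) * Complex.I) : ℂ) = 0 := by
      linear_combination (-(↑(Λ 2 1) + ↑(Λ 2 2) * Complex.I) : ℂ) * E01 - (↑(Λ 0 1) + ↑(Λ 0 2) * Complex.I) * E12 - (↑(Λ 1 1) + ↑(Λ 1 2) * Complex.I) * E20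
    have ru03 := (mul_eq_zero.mp hu03).resolve_left hc0
    have ru2 := (mul_eq_zero.mp hu2).resolve_left hc0
    have rw03 := (mul_eq_zero.mp hw03).resolve_left hc0
    have rw2 := (mul_eq_zero.mp hw2).resolve_left hc0
    rw [sub_eq_zero] at ru03 ru2 rw03 rw2
    simp only [Complex.ext_iff, Complex.add_re, Complex.add_im, Complex.ofReal_re,
      Complex.ofReal_im, Complex.mul_re, Complex.mul_im, Complex.I_re, Complex.I_im] at ru03 ru2 rw03 rw2
    norm_num at ru03 ru2 rw03 rw2
    obtain ⟨F1, F2⟩ := ru2   -- expected: Λ20+Λ23 = 0 type things; check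

    obtain ⟨G1, G2⟩ := rw03
    obtain ⟨G3, G4⟩ := rw2
    replace F2 : Λ 1 0 + Λ 1 3 = 0 := F2.symm
    -- real Lorentz entries
    have hL' := rowrel Λ hL
    have hr00 := congrFun (congrFun hL' 0) 0
    have hL00 := congrFun (congrFun hL 0) 0
    have hL33 := congrFun (congrFun hL 3) 3
    have hL03 := congrFun (congrFun hL 0) 3
    have hL11 := congrFun (congrFun hL 1) 1
    have hL22 := congrFun (congrFun hL 2) 2
    have hL10 := congrFun (congrFun hL 1) 0
    have hL13 := congrFun (congrFun hL 1) 3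
    have hL20 := congrFun (congrFun hL 2) 0
    have hL23 := congrFun (congrFun hL 2) 3
    simp [Matrix.mul_apply, Fin.sum_univ_four, ηM, Matrix.transpose_apply, Matrix.vecHead, Matrix.vecTail] at hr00 hL00 hL33 hL03 hL11 hL22 hL10 hL13 hL20 hL23
    -- |w1|^2 = 1
    have H5 : Λ 1 1 ^ 2 + Λ 1 2 ^ 2 = 1 := by
      linear_combination (-1/2) * hL11 + (-1/2) * hL22 + ((Λ 0 1 + Λ 3 1)/2) * G1
        + ((Λ 0 2 + Λ 3 2)/2) * G2 + ((Λ 1 2 - Λ 2 1)/2) * G3 + (-(Λ 2 2 + Λ 1 1)/2) * G4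
    -- u0 > 0
    have hupos : 0 < Λ 0 0 + Λ 0 3 := by
      by_contra h
      push_neg at h
      have hd : 0 < Λ 0 0 - Λ 0 3 := by linarith
      have hprod : 0 ≤ (-(Λ 0 0 + Λ 0 3)) * (Λ 0 0 - Λ 0 3) := mul_nonneg (by linarith) hd.le
      have hsd : (Λ 0 0 + Λ 0 3) * (Λ 0 0 - Λ 0 3) = 1 + Λ 0 1 ^ 2 + Λ 0 2 ^ 2 := by
        linear_combination hr00
      linarith [hprod, hsd, sq_nonneg (Λ 0 1), sq_nonneg (Λ 0 2)]
    -- u0 * w1 = c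
    have hu1C : ((Λ 1 0 : ℝ) : ℂ) + ((Λ 1 3 : ℝ) : ℂ) = 0 := by exact_mod_cast congrArg (fun t : ℝ => (t : ℂ)) F2
    have huw : ((Λ 0 0 : ℝ) + (Λ 0 3 : ℝ) : ℂ) * ((Λ 1 1 : ℝ) + (Λ 1 2 : ℝ) * Complex.I) = c := by
      push_cast
      linear_combination E01 + ((Λ 0 1 : ℂ) + (Λ 0 2 : ℂ) * Complex.I) * hu1C
    have hcre : (Λ 0 0 + Λ 0 3) * Λ 1 1 = c.re := by
      have := congrArg Complex.re huw
      simpa using this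
    have hcim : (Λ 0 0 + Λ 0 3) * Λ 1 2 = c.im := by
      have := congrArg Complex.im huw
      simpa using this
    have hcn : c.re ^ 2 + c.im ^ 2 = 1 := by
      have h1 := Complex.sq_norm c
      rw [hc] at h1
      rw [Complex.normSq_apply] at h1
      linear_combination -h1
    have hs2 : (Λ 0 0 + Λ 0 3) ^ 2 = 1 := by
      linear_combination ((Λ 0 0 + Λ 0 3) * Λ 1 1 + c.re) * hcre
        + ((Λ 0 0 + Λ 0 3) * Λ 1 2 + c.im) * hcim - (Λ 0 0 + Λ 0 3) ^ 2 * H5 + hcn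
    have F3 : Λ 0 0 + Λ 0 3 = 1 := by
      rcases mul_eq_zero.mp (show ((Λ 0 0 + Λ 0 3) - 1) * ((Λ 0 0 + Λ 0 3) + 1) = 0 by
        linear_combination hs2) with h | h
      · linarith
      · linarith
    have F4 : Λ 3 0 + Λ 3 3 = 1 := by linarith [ru03]
    have C1 : c.re = Λ 1 1 := by linear_combination -hcre + Λ 1 1 * F3
    have C2 : c.im = Λ 1 2 := by linear_combination -hcim + Λ 1 2 * F3
    -- x-vector relations
    have X1 : (Λ 0 0 - Λ 0 3) - (Λ 3 0 - Λ 3 3) = 2 := by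
      linear_combination hL00 - hL33 - (Λ 0 0 - Λ 0 3) * F3 + (Λ 3 0 - Λ 3 3) * F4
        + (Λ 1 0 - Λ 1 3) * F2 + (Λ 2 0 - Λ 2 3) * F1
    have A : Λ 1 1 * (Λ 1 0 - Λ 1 3) - Λ 1 2 * (Λ 2 0 - Λ 2 3) = 2 * Λ 0 1 := by
      linear_combination -hL10 + hL13 - (Λ 2 0 - Λ 2 3) * G3 + Λ 0 1 * X1 + (Λ 3 0 - Λ 3 3) * G1
    have B : Λ 1 2 * (Λ 1 0 - Λ 1 3) + Λ 1 1 * (Λ 2 0 - Λ 2 3) = 2 * Λ 0 2 := by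
      linear_combination -hL20 + hL23 - (Λ 2 0 - Λ 2 3) * G4 + Λ 0 2 * X1 + (Λ 3 0 - Λ 3 3) * G2
    have X2 : Λ 1 0 - Λ 1 3 = 2 * (Λ 0 1 * Λ 1 1 + Λ 0 2 * Λ 1 2) := by
      linear_combination Λ 1 1 * A + Λ 1 2 * B - (Λ 1 0 - Λ 1 3) * H5
    have X3 : Λ 2 0 - Λ 2 3 = 2 * (Λ 0 2 * Λ 1 1 - Λ 0 1 * Λ 1 2) := by
      linear_combination Λ 1 1 * B - Λ 1 2 * A - (Λ 2 0 - Λ 2 3) * H5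
    have Xqq : (Λ 0 0 - Λ 0 3) ^ 2 - (Λ 1 0 - Λ 1 3) ^ 2 - (Λ 2 0 - Λ 2 3) ^ 2
        - (Λ 3 0 - Λ 3 3) ^ 2 = 0 := by
      linear_combination hL00 - 2 * hL03 + hL33
    have Ysum : (Λ 0 0 - Λ 0 3) + (Λ 3 0 - Λ 3 3)
        = 2 * ((Λ 0 1 * Λ 1 1 + Λ 0 2 * Λ 1 2) ^ 2 + (Λ 0 2 * Λ 1 1 - Λ 0 1 * Λ 1 2) ^ 2) := by
      linear_combination (1/2) * Xqq - ((Λ 0 0 - Λ 0 3) + (Λ 3 0 - Λ 3 3))/2 * X1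
        + ((Λ 1 0 - Λ 1 3) + 2 * (Λ 0 1 * Λ 1 1 + Λ 0 2 * Λ 1 2))/2 * X2
        + ((Λ 2 0 - Λ 2 3) + 2 * (Λ 0 2 * Λ 1 1 - Λ 0 1 * Λ 1 2))/2 * X3
    -- construct f and φ
    refine ⟨⟨Λ 0 1 * Λ 1 1 + Λ 0 2 * Λ 1 2, Λ 0 2 * Λ 1 1 - Λ 0 1 * Λ 1 2⟩, c.arg, ?_⟩
    have hcos : Real.cos c.arg = Λ 1 1 := by
      rw [Complex.cos_arg hc0, hc, div_one, C1]
    have hsin : Real.sin c.arg = Λ 1 2 := by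
      rw [Complex.sin_arg, hc, div_one, C2]
    ext i j
    fin_cases i <;> fin_cases j <;>
      simp [Bmat, Rmat, Matrix.mul_apply, Fin.sum_univ_four, hcos, hsin,
        Complex.normSq_mk, Matrix.vecHead, Matrix.vecTail]
    · linear_combination (1/2) * F3 + (1/4) * X1 + (1/4) * Ysum
    · linear_combination -Λ 0 1 * H5
    · linear_combination -Λ 0 2 * H5
    · linear_combination (1/2) * F3 - (1/4) * X1 - (1/4) * Ysum
    · linear_combination (1/2) * F2 + (1/2) * X2
    · linear_combination (1/2) * F2 - (1/2) * X2
    · linear_combination (1/2) * F1 + (1/2) * X3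
    · linear_combination G3
    · linear_combination G4
    · linear_combination (1/2) * F1 - (1/2) * X3
    · linear_combination (1/2) * F4 - (1/4) * X1 + (1/4) * Ysum
    · linear_combination -G1 - Λ 0 1 * H5
    · linear_combination -G2 - Λ 0 2 * H5
    · linear_combination (1/2) * F4 + (1/4) * X1 - (1/4) * Ysum
  · rintro ⟨f, φ, rfl⟩
    refine ⟨(Real.cos φ : ℂ) + Real.sin φ * Complex.I, ?_, ?_⟩
    · rw [show ((Real.cos φ : ℂ) + Real.sin φ * Complex.I) = Complex.exp (φ * Complex.I) by
        rw [Complex.exp_mul_I, Complex.ofReal_cos, Complex.ofReal_sin]]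
      exact Complex.norm_exp_ofReal_mul_I φ
    · have hl : (toC (Bmat f * Rmat φ)).mulVec lV = lV := by
        ext i
        fin_cases i <;>
          simp [toC, Matrix.mulVec, dotProduct, Fin.sum_univ_four, Matrix.mul_apply,
            Bmat, Rmat, lV, Complex.ext_iff]
      have hm : (toC (Bmat f * Rmat φ)).mulVec mV =
          ((Real.cos φ : ℂ) + Real.sin φ * Complex.I) • mV
          + (((Real.cos φ : ℂ) + Real.sin φ * Complex.I) * f) • lV := by
        ext i
        fin_cases i <;>
          simp [toC, Matrix.mulVec, dotProduct, Fin.sum_univ_four, Matrix.mul_apply,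
            Bmat, Rmat, lV, mV, Complex.ext_iff] <;> ring_nf <;> simp <;> try constructor
        all_goals try ring
      rw [lmWedge, Matrix.mul_sub, Matrix.sub_mul, keylem, keylem, hl, hm]
      ext i j
      fin_cases i <;> fin_cases j <;>
        simp [Matrix.vecMulVec_apply, lV, mV, Matrix.smul_apply, smul_eq_mul,
          Matrix.sub_apply, Matrix.add_apply, Pi.add_apply, Pi.smul_apply] <;> ring
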